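/- There exists an am-AMM competitive equilibrium: there is an L* > 0 with max_{f ∈ [0, f_max]} (f·H0(f, L*) − AE0(f)) = r, and setting R* = (AP0(0) + r)·V(L*), the pair (R*, L*) satisfies both zero-profit conditions Π_MGR(R*, L*) = 0 and Π_LP(R*, L*) = 0. -/

import Mathlib

open Set Filter

/-- **Existence of an am-AMM competitive equilibrium (part of Theorem 1).** There exists a
liquidity level `L* > 0` with `max_{f ∈ [0,fmax]} (f·H0(f,L*) − AE0(f)) = r`, and with rent
`R* = (AP0(0) + r)·V(L*)` the pair `(R*, L*)` satisfies both zero-profit conditions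
`Π_MGR(R*,L*) = 0` and `Π_LP(R*,L*) = 0`, where `V(L) = 2·√P·L`,
`Π_MGR(R,L) = (max_{f ∈ [0,fmax]} (f·H0(f,L) + AP0(0) − AE0(f)))·V(L) − R` and
`Π_LP(R,L) = R − (AP0(0) + r)·V(L)`. -/
theorem amAMM_equilibrium_exists
    (fmax r P : ℝ) (hfmax : 0 < fmax) (hr : 0 < r) (hP : 0 < P)
    (H0 : ℝ → ℝ → ℝ)
    (hH0cont : ContinuousOn (fun p : ℝ × ℝ => H0 p.1 p.2) (Icc 0 fmax ×ˢ Ioi 0))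
    (hH0f : ∀ L : ℝ, 0 < L → AntitoneOn (fun f => H0 f L) (Icc 0 fmax))
    (hH0L : ∀ f ∈ Icc (0:ℝ) fmax, StrictAntiOn (fun L => H0 f L) (Ioi 0))
    (hH0top : ∀ f ∈ Icc (0:ℝ) fmax, Tendsto (fun L => H0 f L) atTop (nhds 0))
    (hH0zero : ∀ f ∈ Icc (0:ℝ) fmax,
      Tendsto (fun L => H0 f L) (nhdsWithin 0 (Ioi 0)) atTop)
    (AP0 : ℝ → ℝ)
    (hAP0cont : ContinuousOn AP0 (Icc 0 fmax))
    (hAP0nonneg : ∀ f ∈ Icc (0:ℝ) fmax, 0 ≤ AP0 f)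
    (hAP0anti : AntitoneOn AP0 (Icc 0 fmax))
    (AE0 : ℝ → ℝ)
    (hAE0cont : ContinuousOn AE0 (Icc 0 fmax))
    (hAE0nonneg : ∀ f ∈ Icc (0:ℝ) fmax, 0 ≤ AE0 f)
    (hAE0anti : AntitoneOn AE0 (Icc 0 fmax))
    (hAE0le : ∀ f ∈ Icc (0:ℝ) fmax, AE0 f ≤ AP0 f)
    (hAE0lt : ∀ f ∈ Icc (0:ℝ) fmax, 0 < f → AE0 f < AP0 f) :
    ∃ Lstar : ℝ, 0 < Lstar ∧
      sSup ((fun f => f * H0 f Lstar - AE0 f) '' Icc 0 fmax) = r ∧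
      (sSup ((fun f => f * H0 f Lstar + AP0 0 - AE0 f) '' Icc 0 fmax))
          * (2 * Real.sqrt P * Lstar) - (AP0 0 + r) * (2 * Real.sqrt P * Lstar) = 0 ∧
      (AP0 0 + r) * (2 * Real.sqrt P * Lstar)
          - (AP0 0 + r) * (2 * Real.sqrt P * Lstar) = 0 := by
  classical
  -- H0 is positive on the domain
  have hfmem : fmax ∈ Icc (0:ℝ) fmax := ⟨hfmax.le, le_rfl⟩
  have h0mem : (0:ℝ) ∈ Icc (0:ℝ) fmax := ⟨le_rfl, hfmax.le⟩
  have hHnonneg : ∀ f ∈ Icc (0:ℝ) fmax, ∀ L : ℝ, 0 < L → 0 ≤ H0 f L := by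
    intro f hf L hL
    have hev : ∀ᶠ L' in atTop, H0 f L' ≤ H0 f L := by
      filter_upwards [eventually_gt_atTop L] with L' hL'
      exact (hH0L f hf (mem_Ioi.2 hL) (mem_Ioi.2 (hL.trans hL')) hL').le
    exact le_of_tendsto (hH0top f hf) hev
  -- choose a small L1 where the max is at least r
  obtain ⟨L1, hL1big, hL1pos⟩ :=
    (((hH0zero fmax hfmem).eventually_ge_atTop ((r + AE0 fmax) / fmax)).and
      self_mem_nhdsWithin).exists
  have hL1pos : (0:ℝ) < L1 := hL1pos
  -- choose a large L2 where the max is less than r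
  have hrf : (0:ℝ) < r / fmax := div_pos hr hfmax
  obtain ⟨L2, hL2small, hL2big⟩ :=
    (((hH0top 0 h0mem).eventually (eventually_lt_nhds hrf)).and
      (eventually_ge_atTop (L1 + 1))).exists
  have hL12 : L1 ≤ L2 := le_trans (by linarith) hL2big
  have hL2pos : (0:ℝ) < L2 := lt_of_lt_of_le hL1pos hL12
  -- clamping functions
  set cF : ℝ → ℝ := fun f => max 0 (min f fmax) with hcF
  set cL : ℝ → ℝ := fun L => max L1 (min L L2) with hcL
  have hcFcont : Continuous cF := continuous_const.max (continuous_id.min continuous_const)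
  have hcLcont : Continuous cL := continuous_const.max (continuous_id.min continuous_const)
  have hcFmem : ∀ x, cF x ∈ Icc (0:ℝ) fmax := fun x =>
    ⟨le_max_left _ _, max_le hfmax.le (min_le_right _ _)⟩
  have hcLmem : ∀ x, cL x ∈ Ioi (0:ℝ) := fun x => lt_of_lt_of_le hL1pos (le_max_left _ _)
  have hcFeq : ∀ f ∈ Icc (0:ℝ) fmax, cF f = f := by
    intro f hf; simp only [hcF, min_eq_left hf.2, max_eq_right hf.1]
  have hcLeq : ∀ L ∈ Icc L1 L2, cL L = L := by
    intro L hL; simp only [hcL, min_eq_left hL.2, max_eq_right hL.1]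
  -- globally continuous extensions
  set G : ℝ × ℝ → ℝ := fun p => H0 (cF p.1) (cL p.2) with hG
  have hGcont : Continuous G := by
    have : G = (fun p : ℝ × ℝ => H0 p.1 p.2) ∘ (fun p : ℝ × ℝ => (cF p.1, cL p.2)) := rfl
    rw [this]
    exact hH0cont.comp_continuous
      ((hcFcont.comp continuous_fst).prodMk (hcLcont.comp continuous_snd))
      (fun p => ⟨hcFmem p.1, hcLmem p.2⟩)
  set AE : ℝ → ℝ := fun f => AE0 (cF f) with hAE
  have hAEcont : Continuous AE := hAE0cont.comp_continuous hcFcont hcFmem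
  set F : ℝ → ℝ → ℝ := fun L f => f * G (f, L) - AE f with hF
  have hFcont : Continuous (Function.uncurry F) := by
    have : Function.uncurry F = fun p : ℝ × ℝ => p.2 * G (p.2, p.1) - AE p.2 := rfl
    rw [this]
    exact (continuous_snd.mul
      (hGcont.comp (continuous_snd.prodMk continuous_fst))).sub (hAEcont.comp continuous_snd)
  set M : ℝ → ℝ := fun L => sSup (F L '' Icc 0 fmax) with hM
  have hMcont : Continuous M := isCompact_Icc.continuous_sSup hFcont
  -- F agrees with the real function on the relevant box
  have hFeq : ∀ L ∈ Icc L1 L2, ∀ f ∈ Icc (0:ℝ) fmax,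
      F L f = f * H0 f L - AE0 f := by
    intro L hL f hf
    simp only [hF, hG, hAE, hcFeq f hf, hcLeq L hL]
  have hFLcont : ∀ L : ℝ, Continuous (F L) := fun L =>
    hFcont.comp (continuous_const.prodMk continuous_id)
  have hbdd : ∀ L : ℝ, BddAbove (F L '' Icc 0 fmax) := fun L =>
    (isCompact_Icc.image (hFLcont L)).bddAbove
  have hne : ∀ L : ℝ, (F L '' Icc 0 fmax).Nonempty := fun L =>
    (nonempty_Icc.2 hfmax.le).image _
  -- M L1 ≥ r
  have hM1 : r ≤ M L1 := by
    have h1 : F L1 fmax = fmax * H0 fmax L1 - AE0 fmax :=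
      hFeq L1 ⟨le_rfl, hL12⟩ fmax hfmem
    have h2 : r ≤ fmax * H0 fmax L1 - AE0 fmax := by
      have := (div_le_iff₀ hfmax).1 hL1big
      linarith [this]
    calc r ≤ F L1 fmax := by rw [h1]; exact h2
      _ ≤ M L1 := le_csSup (hbdd L1) (mem_image_of_mem _ hfmem)
  -- M L2 ≤ fmax * H0 0 L2 < r
  have hM2 : M L2 ≤ r := by
    apply csSup_le (hne L2)
    rintro y ⟨f, hf, rfl⟩
    rw [hFeq L2 ⟨hL12, le_rfl⟩ f hf]
    have h1 : f * H0 f L2 ≤ fmax * H0 0 L2 :=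
      mul_le_mul hf.2 (hH0f L2 hL2pos h0mem hf hf.1) (hHnonneg f hf L2 hL2pos) hfmax.le
    have h2 : H0 0 L2 * fmax < r := (lt_div_iff₀ hfmax).1 hL2small
    have h3 := hAE0nonneg f hf
    nlinarith
  -- intermediate value theorem
  obtain ⟨Lstar, hLstarmem, hLstareq⟩ :=
    intermediate_value_Icc' hL12 hMcont.continuousOn ⟨hM2, hM1⟩
  have hLstarpos : (0:ℝ) < Lstar := lt_of_lt_of_le hL1pos hLstarmem.1
  refine ⟨Lstar, hLstarpos, ?_, ?_, by ring⟩
  -- image identification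
  · have himg : (fun f => f * H0 f Lstar - AE0 f) '' Icc 0 fmax = F Lstar '' Icc 0 fmax :=
      image_congr fun f hf => (hFeq Lstar hLstarmem f hf).symm
    rw [himg]; exact hLstareq
  · have himg : (fun f => f * H0 f Lstar - AE0 f) '' Icc 0 fmax = F Lstar '' Icc 0 fmax :=
      image_congr fun f hf => (hFeq Lstar hLstarmem f hf).symm
    have hS1 : sSup ((fun f => f * H0 f Lstar - AE0 f) '' Icc 0 fmax) = r := by
      rw [himg]; exact hLstareq
    have himg2 : (fun f => f * H0 f Lstar + AP0 0 - AE0 f) '' Icc 0 fmax =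
        (fun x => x + AP0 0) '' ((fun f => f * H0 f Lstar - AE0 f) '' Icc 0 fmax) := by
      rw [image_image]
      exact image_congr fun f _ => by ring
    have hmono : Monotone (fun x : ℝ => x + AP0 0) := fun a b h => add_le_add_left h _
    have hsup : sSup ((fun f => f * H0 f Lstar + AP0 0 - AE0 f) '' Icc 0 fmax) = r + AP0 0 := by
      rw [himg2, ← hmono.map_csSup_of_continuousAt (by fun_prop)
        ((nonempty_Icc.2 hfmax.le).image _) (himg ▸ hbdd Lstar), hS1]
    rw [hsup]; ring
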